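/- arXiv:1902.03086 — 2 statements merged into one kernel-verified Lean document; each statement's English description precedes it below -/
import Mathlib

section
/- Let S be positive semidefinite, λ > 0, and Ŝ symmetric with ‖(S+λI)^{-1/2}(Ŝ−S)(S+λI)^{-1/2}‖ ≤ 1/2. Then (2/3)·I ⪯ (S+λI)^{1/2}(Ŝ+λI)^{-1}(S+λI)^{1/2} ⪯ 2·I. -/
open Matrix
open scoped Matrix.Norms.L2Operator

/-- The positive semidefinite square root of a matrix (junk value `0` if the
matrix is not positive semidefinite). -/
noncomputable def msqrt {d : ℕ} (M : Matrix (Fin d) (Fin d) ℝ) :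
    Matrix (Fin d) (Fin d) ℝ := by
  classical exact if h : M.PosSemidef then
    (h.1.eigenvectorUnitary : Matrix (Fin d) (Fin d) ℝ) *
      diagonal (fun i => Real.sqrt (h.1.eigenvalues i)) *
      (star h.1.eigenvectorUnitary : Matrix (Fin d) (Fin d) ℝ) else 0

/-- The inverse square root `M^{-1/2}` of a positive semidefinite matrix. -/
noncomputable def minvSqrt {d : ℕ} (M : Matrix (Fin d) (Fin d) ℝ) :
    Matrix (Fin d) (Fin d) ℝ :=
  (msqrt M)⁻¹

/-- Loewner order: `A ⪯ B` iff `B - A` is positive semidefinite. -/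
def Loewner {d : ℕ} (A B : Matrix (Fin d) (Fin d) ℝ) : Prop :=
  (B - A).PosSemidef

section Aux

open scoped InnerProductSpace

variable {d : ℕ}

lemma msqrt_psd_mul {M : Matrix (Fin d) (Fin d) ℝ} (h : M.PosSemidef) :
    (msqrt M).PosSemidef ∧ msqrt M * msqrt M = M := by
  unfold msqrt
  rw [dif_pos h]
  set U : Matrix (Fin d) (Fin d) ℝ := (h.1.eigenvectorUnitary : Matrix (Fin d) (Fin d) ℝ)
  have hU : star U * U = 1 := Matrix.UnitaryGroup.star_mul_self h.1.eigenvectorUnitary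
  constructor
  · have hD : (diagonal (fun i => Real.sqrt (h.1.eigenvalues i))).PosSemidef :=
      posSemidef_diagonal_iff.mpr fun i => Real.sqrt_nonneg _
    exact hD.mul_mul_conjTranspose_same U
  · have hspec := h.1.spectral_theorem
    simp only [Unitary.conjStarAlgAut_apply] at hspec
    calc U * diagonal (fun i => Real.sqrt (h.1.eigenvalues i)) * star U *
          (U * diagonal (fun i => Real.sqrt (h.1.eigenvalues i)) * star U)
        = U * (diagonal (fun i => Real.sqrt (h.1.eigenvalues i)) * (star U * U) *
          diagonal (fun i => Real.sqrt (h.1.eigenvalues i))) * star U := by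
          simp only [Matrix.mul_assoc]
      _ = U * diagonal (RCLike.ofReal ∘ h.1.eigenvalues) * star U := by
          rw [hU, Matrix.mul_one, diagonal_mul_diagonal]
          have hf : (fun i => Real.sqrt (h.1.eigenvalues i) * Real.sqrt (h.1.eigenvalues i))
              = RCLike.ofReal ∘ h.1.eigenvalues := by
            funext i
            simp [Real.mul_self_sqrt (h.eigenvalues_nonneg i)]
          rw [hf]
      _ = M := hspec.symm

lemma herm_smul {P : Matrix (Fin d) (Fin d) ℝ} (hP : P.IsHermitian) (c : ℝ) :
    (c • P).IsHermitian := by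
  show (c • P)ᴴ = c • P
  rw [conjTranspose_smul, star_trivial, hP.eq]

lemma smul_posSemidef {P : Matrix (Fin d) (Fin d) ℝ} (hP : P.PosSemidef) {c : ℝ} (hc : 0 ≤ c) :
    (c • P).PosSemidef := by
  refine posSemidef_iff_dotProduct_mulVec.mpr ⟨herm_smul hP.isHermitian c, fun x => ?_⟩
  rw [smul_mulVec, dotProduct_smul, smul_eq_mul]
  exact mul_nonneg hc ((posSemidef_iff_dotProduct_mulVec.mp hP).2 x)

lemma smul_one_posDef {c : ℝ} (hc : 0 < c) :
    ((c • 1 : Matrix (Fin d) (Fin d) ℝ)).PosDef := by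
  refine PosDef.of_dotProduct_mulVec_pos (herm_smul isHermitian_one c) fun x hx => ?_
  rw [smul_mulVec, dotProduct_smul, one_mulVec, smul_eq_mul]
  exact mul_pos hc (by simpa using Matrix.dotProduct_star_self_pos_iff.mpr hx)

lemma abs_dot_le (E : Matrix (Fin d) (Fin d) ℝ) (x : Fin d → ℝ) :
    |x ⬝ᵥ (E *ᵥ x)| ≤ ‖E‖ * (x ⬝ᵥ x) := by
  set y : EuclideanSpace ℝ (Fin d) := (WithLp.equiv 2 _).symm x with hy
  set z : EuclideanSpace ℝ (Fin d) := (WithLp.equiv 2 _).symm (E *ᵥ x) with hz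
  have h1 : x ⬝ᵥ (E *ᵥ x) = ⟪y, z⟫_ℝ := by
    rw [hy, hz, EuclideanSpace.inner_eq_star_dotProduct]; simp [dotProduct_comm]
  have h2 : x ⬝ᵥ x = ‖y‖ * ‖y‖ := by
    rw [← real_inner_self_eq_norm_mul_norm, hy, EuclideanSpace.inner_eq_star_dotProduct]; simp
  have h3 := abs_real_inner_le_norm y z
  have h4 : ‖z‖ ≤ ‖E‖ * ‖y‖ := E.l2_opNorm_mulVec y
  rw [h1, h2]
  calc |⟪y, z⟫_ℝ| ≤ ‖y‖ * ‖z‖ := h3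
    _ ≤ ‖y‖ * (‖E‖ * ‖y‖) := by nlinarith [norm_nonneg z, norm_nonneg y]
    _ = ‖E‖ * (‖y‖ * ‖y‖) := by ring

lemma norm_le_posSemidef {E : Matrix (Fin d) (Fin d) ℝ} (hE : E.IsHermitian) {c : ℝ}
    (h : ‖E‖ ≤ c) : (c • 1 + E).PosSemidef ∧ (c • 1 - E).PosSemidef := by
  have hdot : ∀ x : Fin d → ℝ, |x ⬝ᵥ (E *ᵥ x)| ≤ c * (x ⬝ᵥ x) := by
    intro x
    refine (abs_dot_le E x).trans (mul_le_mul_of_nonneg_right h ?_)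
    simpa using dotProduct_star_self_nonneg x
  constructor
  · refine posSemidef_iff_dotProduct_mulVec.mpr ⟨(herm_smul isHermitian_one c).add hE, fun x => ?_⟩
    have h1 := (abs_le.mp (hdot x)).1
    rw [star_trivial, add_mulVec, dotProduct_add, smul_mulVec, one_mulVec,
      dotProduct_smul, smul_eq_mul]
    linarith
  · refine posSemidef_iff_dotProduct_mulVec.mpr ⟨(herm_smul isHermitian_one c).sub hE, fun x => ?_⟩
    have h2 := (abs_le.mp (hdot x)).2
    rw [star_trivial, sub_mulVec, dotProduct_sub, smul_mulVec, one_mulVec,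
      dotProduct_smul, smul_eq_mul]
    linarith

lemma inv_conj {M : Matrix (Fin d) (Fin d) ℝ} (hM : M.PosDef) {c : ℝ} (hc : 0 < c) :
    ((c • 1 - M).PosSemidef → (M⁻¹ - c⁻¹ • 1).PosSemidef) ∧
    ((M - c • 1).PosSemidef → (c⁻¹ • 1 - M⁻¹).PosSemidef) := by
  set N := msqrt M with hNdef
  have hNpsd := (msqrt_psd_mul hM.posSemidef).1
  have hNN : N * N = M := (msqrt_psd_mul hM.posSemidef).2
  have hdet : IsUnit N.det := by
    have h1 : N.det * N.det = M.det := by rw [← det_mul, hNN]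
    have h2 := hM.det_pos
    refine isUnit_iff_ne_zero.mpr fun h0 => ?_
    rw [h0, mul_zero] at h1
    rw [← h1] at h2
    exact lt_irrefl _ h2
  have hNl : N⁻¹ * N = 1 := nonsing_inv_mul N hdet
  have hNr : N * N⁻¹ = 1 := mul_nonsing_inv N hdet
  have hNinvH : (N⁻¹)ᴴ = N⁻¹ := by rw [conjTranspose_nonsing_inv, hNpsd.isHermitian.eq]
  have hMinv : N⁻¹ * N⁻¹ = M⁻¹ := by rw [← Matrix.mul_inv_rev, hNN]
  have hone : N⁻¹ * M * N⁻¹ = 1 := by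
    calc N⁻¹ * M * N⁻¹ = (N⁻¹ * N) * (N * N⁻¹) := by rw [← hNN]; noncomm_ring
      _ = 1 := by rw [hNl, hNr, one_mul]
  constructor
  · intro hP
    have key : (N⁻¹ * (c • 1 - M) * N⁻¹).PosSemidef := by
      have := hP.mul_mul_conjTranspose_same N⁻¹
      rwa [hNinvH] at this
    have expand : N⁻¹ * (c • 1 - M) * N⁻¹ = c • M⁻¹ - 1 := by
      rw [mul_sub, sub_mul, mul_smul_comm, mul_one, smul_mul_assoc, hMinv, hone]
    have heq : M⁻¹ - c⁻¹ • 1 = c⁻¹ • (c • M⁻¹ - 1) := by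
      rw [smul_sub, smul_smul, inv_mul_cancel₀ hc.ne', one_smul]
    rw [heq, ← expand]
    exact smul_posSemidef key (by positivity)
  · intro hP
    have key : (N⁻¹ * (M - c • 1) * N⁻¹).PosSemidef := by
      have := hP.mul_mul_conjTranspose_same N⁻¹
      rwa [hNinvH] at this
    have expand : N⁻¹ * (M - c • 1) * N⁻¹ = 1 - c • M⁻¹ := by
      rw [mul_sub, sub_mul, mul_smul_comm, mul_one, smul_mul_assoc, hMinv, hone]
    have heq : c⁻¹ • 1 - M⁻¹ = c⁻¹ • (1 - c • M⁻¹) := by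
      rw [smul_sub, smul_smul, inv_mul_cancel₀ hc.ne', one_smul]
    rw [heq, ← expand]
    exact smul_posSemidef key (by positivity)

end Aux

/-- If `‖(S+λI)^{-1/2}(Ŝ−S)(S+λI)^{-1/2}‖ ≤ 1/2`, then
`(2/3)·I ⪯ (S+λI)^{1/2}(Ŝ+λI)^{-1}(S+λI)^{1/2} ⪯ 2·I`. -/
theorem psd_sandwich_of_opNorm_le_half {d : ℕ}
    (S Shat : Matrix (Fin d) (Fin d) ℝ) (l : ℝ)
    (hS : S.PosSemidef) (hShat : Shat.IsHermitian) (hl : 0 < l)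
    (herr : ‖minvSqrt (S + l • 1) * (Shat - S) * minvSqrt (S + l • 1)‖ ≤ 1 / 2) :
    Loewner ((2 / 3 : ℝ) • (1 : Matrix (Fin d) (Fin d) ℝ))
        (msqrt (S + l • 1) * (Shat + l • 1)⁻¹ * msqrt (S + l • 1)) ∧
    Loewner (msqrt (S + l • 1) * (Shat + l • 1)⁻¹ * msqrt (S + l • 1))
        ((2 : ℝ) • (1 : Matrix (Fin d) (Fin d) ℝ)) := by
  have hA : (S + l • 1).PosDef := Matrix.PosDef.posSemidef_add hS (smul_one_posDef hl)
  set B : Matrix (Fin d) (Fin d) ℝ := msqrt (S + l • 1) with hBdef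
  have hBpsd : B.PosSemidef := (msqrt_psd_mul hA.posSemidef).1
  have hBB : B * B = S + l • 1 := (msqrt_psd_mul hA.posSemidef).2
  have hdet : IsUnit B.det := by
    have h1 : B.det * B.det = (S + l • 1).det := by rw [← det_mul, hBB]
    have h2 := hA.det_pos
    refine isUnit_iff_ne_zero.mpr fun h0 => ?_
    rw [h0, mul_zero] at h1
    rw [← h1] at h2
    exact lt_irrefl _ h2
  have hBl : B⁻¹ * B = 1 := nonsing_inv_mul B hdet
  have hBr : B * B⁻¹ = 1 := mul_nonsing_inv B hdet
  have hBinvH : (B⁻¹)ᴴ = B⁻¹ := by rw [conjTranspose_nonsing_inv, hBpsd.isHermitian.eq]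
  set E : Matrix (Fin d) (Fin d) ℝ := B⁻¹ * (Shat - S) * B⁻¹ with hEdef
  have hEH : E.IsHermitian := by
    show Eᴴ = E
    rw [hEdef, conjTranspose_mul, conjTranspose_mul, hBinvH,
      (hShat.sub hS.isHermitian).eq]
    noncomm_ring
  have hnorm : ‖E‖ ≤ 1 / 2 := herr
  obtain ⟨hplus, hminus⟩ := norm_le_posSemidef hEH hnorm
  set M : Matrix (Fin d) (Fin d) ℝ := 1 + E with hMdef
  have hMpd : M.PosDef := by
    have hsplit : M = (1 / 2 : ℝ) • 1 + ((1 / 2 : ℝ) • 1 + E) := by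
      rw [hMdef]; module
    rw [hsplit]
    exact Matrix.PosDef.add_posSemidef (smul_one_posDef (by norm_num)) hplus
  have hBE : B * E * B = Shat - S := by
    have h : B * E * B = (B * B⁻¹) * (Shat - S) * (B⁻¹ * B) := by
      rw [hEdef]; noncomm_ring
    rw [h, hBr, hBl, one_mul, mul_one]
  have hfact : B * M * B = Shat + l • 1 := by
    calc B * M * B = B * B + B * E * B := by rw [hMdef]; noncomm_ring
      _ = (S + l • 1) + (Shat - S) := by rw [hBB, hBE]
      _ = Shat + l • 1 := by abel
  have hT : B * (Shat + l • 1)⁻¹ * B = M⁻¹ := by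
    have hinv : (Shat + l • 1)⁻¹ = B⁻¹ * M⁻¹ * B⁻¹ := by
      rw [← hfact, Matrix.mul_inv_rev, Matrix.mul_inv_rev]
      noncomm_ring
    rw [hinv]
    calc B * (B⁻¹ * M⁻¹ * B⁻¹) * B = (B * B⁻¹) * M⁻¹ * (B⁻¹ * B) := by noncomm_ring
      _ = M⁻¹ := by rw [hBr, hBl, one_mul, mul_one]
  constructor
  · show (B * (Shat + l • 1)⁻¹ * B - (2 / 3 : ℝ) • 1).PosSemidef
    rw [hT]
    have h32 : (((3 : ℝ) / 2) • 1 - M).PosSemidef := by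
      have : ((3 : ℝ) / 2) • (1 : Matrix (Fin d) (Fin d) ℝ) - M
          = (1 / 2 : ℝ) • 1 - E := by rw [hMdef]; module
      rw [this]; exact hminus
    have := (inv_conj hMpd (c := 3 / 2) (by norm_num)).1 h32
    have h23 : ((3 : ℝ) / 2)⁻¹ = 2 / 3 := by norm_num
    rwa [h23] at this
  · show ((2 : ℝ) • 1 - B * (Shat + l • 1)⁻¹ * B).PosSemidef
    rw [hT]
    have h12 : (M - ((1 : ℝ) / 2) • 1).PosSemidef := by
      have : M - ((1 : ℝ) / 2) • (1 : Matrix (Fin d) (Fin d) ℝ)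
          = (1 / 2 : ℝ) • 1 + E := by rw [hMdef]; module
      rw [this]; exact hplus
    have := (inv_conj hMpd (c := 1 / 2) (by norm_num)).2 h12
    have h2 : ((1 : ℝ) / 2)⁻¹ = 2 := by norm_num
    rwa [h2] at this
end

section
/- Under the hypotheses that S ⪰ 0, λ > 0, and ‖(S+λI)^{-1/2}(Ŝ−S)(S+λI)^{-1/2}‖ ≤ 1/2, one has ‖(S+λI)^{1/2}(Ŝ+λI)^{-1/2}‖² ≤ 2 and ‖(S+λI)^{-1/2}(Ŝ+λI)^{1/2}‖² ≤ 3/2. -/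
open Matrix
open scoped Matrix.Norms.L2Operator

lemma msqrt_spec {d : ℕ} (M : Matrix (Fin d) (Fin d) ℝ) (h : M.PosSemidef) :
    msqrt M * msqrt M = M ∧ (msqrt M)ᴴ = msqrt M := by
  have e : msqrt M = (h.1.eigenvectorUnitary : Matrix (Fin d) (Fin d) ℝ) *
      diagonal (fun i => Real.sqrt (h.1.eigenvalues i)) *
      (star h.1.eigenvectorUnitary : Matrix (Fin d) (Fin d) ℝ) := by
    rw [msqrt, dif_pos h]
  have hU : (star h.1.eigenvectorUnitary : Matrix (Fin d) (Fin d) ℝ) *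
      (h.1.eigenvectorUnitary : Matrix (Fin d) (Fin d) ℝ) = 1 := by
    simp
  constructor
  · rw [e]
    calc _ = (h.1.eigenvectorUnitary : Matrix (Fin d) (Fin d) ℝ) *
          (diagonal (fun i => Real.sqrt (h.1.eigenvalues i)) *
          ((star h.1.eigenvectorUnitary : Matrix (Fin d) (Fin d) ℝ) *
          (h.1.eigenvectorUnitary : Matrix (Fin d) (Fin d) ℝ)) *
          diagonal (fun i => Real.sqrt (h.1.eigenvalues i))) *
          (star h.1.eigenvectorUnitary : Matrix (Fin d) (Fin d) ℝ) := by simp only [mul_assoc]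
      _ = M := by
        rw [hU, mul_one, diagonal_mul_diagonal]
        conv_rhs => rw [h.1.spectral_theorem, Unitary.conjStarAlgAut_apply]
        congr 3
        funext i
        simp [Real.mul_self_sqrt (h.eigenvalues_nonneg i)]
  · rw [e, conjTranspose_mul, conjTranspose_mul, diagonal_conjTranspose, star_eq_conjTranspose,
      conjTranspose_conjTranspose]
    have hf : (star fun i => Real.sqrt (h.1.eigenvalues i)) = fun i => Real.sqrt (h.1.eigenvalues i) := by
      funext i
      simp
    rw [hf, mul_assoc]

lemma matrix_norm_one_le {d : ℕ} : ‖(1 : Matrix (Fin d) (Fin d) ℝ)‖ ≤ 1 := by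
  have h := Matrix.l2_opNorm_conjTranspose_mul_self (1 : Matrix (Fin d) (Fin d) ℝ)
  rw [conjTranspose_one, mul_one] at h
  nlinarith [norm_nonneg (1 : Matrix (Fin d) (Fin d) ℝ)]

lemma abs_dotProduct_mulVec_le {d : ℕ} (E : Matrix (Fin d) (Fin d) ℝ) (x : Fin d → ℝ) :
    |x ⬝ᵥ (E *ᵥ x)| ≤ ‖E‖ * (x ⬝ᵥ x) := by
  set x' : EuclideanSpace ℝ (Fin d) := (WithLp.equiv 2 _).symm x with hx'
  set y' : EuclideanSpace ℝ (Fin d) := (WithLp.equiv 2 _).symm (E *ᵥ x) with hy'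
  have h1 : x ⬝ᵥ (E *ᵥ x) = (inner ℝ x' y' : ℝ) := by
    rw [EuclideanSpace.inner_eq_star_dotProduct]
    simp [hx', hy']
    exact dotProduct_comm _ _
  have h2 : x ⬝ᵥ x = ‖x'‖ * ‖x'‖ := by
    rw [← real_inner_self_eq_norm_mul_norm, EuclideanSpace.inner_eq_star_dotProduct]
    simp [hx']
  have h3 : ‖y'‖ ≤ ‖E‖ * ‖x'‖ := E.l2_opNorm_mulVec x'
  rw [h1, h2]
  calc |(inner ℝ x' y' : ℝ)| ≤ ‖x'‖ * ‖y'‖ := abs_real_inner_le_norm x' y'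
    _ ≤ ‖E‖ * (‖x'‖ * ‖x'‖) := by nlinarith [norm_nonneg x', norm_nonneg y']

lemma dotProduct_self_pos {d : ℕ} {x : Fin d → ℝ} (hx : x ≠ 0) : 0 < x ⬝ᵥ x := by
  have h0 : 0 ≤ x ⬝ᵥ x := Finset.sum_nonneg fun i _ => mul_self_nonneg (x i)
  rcases h0.lt_or_eq with h | h
  · exact h
  · exact absurd (dotProduct_self_eq_zero.mp h.symm) hx


/-- Under `‖(S+λI)^{-1/2}(Ŝ−S)(S+λI)^{-1/2}‖ ≤ 1/2`, one has
`‖(S+λI)^{1/2}(Ŝ+λI)^{-1/2}‖² ≤ 2` and `‖(S+λI)^{-1/2}(Ŝ+λI)^{1/2}‖² ≤ 3/2`. -/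
theorem opNorm_sq_bounds_of_opNorm_le_half {d : ℕ}
    (S Shat : Matrix (Fin d) (Fin d) ℝ) (l : ℝ)
    (hS : S.PosSemidef) (hShat : Shat.IsHermitian) (hl : 0 < l)
    (herr : ‖minvSqrt (S + l • 1) * (Shat - S) * minvSqrt (S + l • 1)‖ ≤ 1 / 2) :
    ‖msqrt (S + l • 1) * minvSqrt (Shat + l • 1)‖ ^ 2 ≤ 2 ∧
    ‖minvSqrt (S + l • 1) * msqrt (Shat + l • 1)‖ ^ 2 ≤ 3 / 2 := by
  classical
  simp only [minvSqrt] at herr ⊢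
  set A := S + l • 1 with hAdef
  set B := Shat + l • 1 with hBdef
  have hl1 : ((l : ℝ) • (1 : Matrix (Fin d) (Fin d) ℝ)).PosDef := by
    rw [Matrix.smul_one_eq_diagonal]
    exact Matrix.posDef_diagonal_iff.mpr fun _ => hl
  have hA : A.PosDef := Matrix.PosDef.posSemidef_add hS hl1
  set R := msqrt A with hRdef
  have hRR : R * R = A := (msqrt_spec A hA.posSemidef).1
  have hRH : Rᴴ = R := (msqrt_spec A hA.posSemidef).2
  have hdetR : R.det ≠ 0 := by
    intro h
    have := hA.det_pos.ne'
    rw [← hRR, Matrix.det_mul, h, mul_zero] at this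
    exact this rfl
  have hR1 : R * R⁻¹ = 1 := Matrix.mul_nonsing_inv R (isUnit_iff_ne_zero.mpr hdetR)
  have hR2 : R⁻¹ * R = 1 := Matrix.nonsing_inv_mul R (isUnit_iff_ne_zero.mpr hdetR)
  have hRiH : R⁻¹ᴴ = R⁻¹ := by rw [Matrix.conjTranspose_nonsing_inv, hRH]
  set E := R⁻¹ * (Shat - S) * R⁻¹ with hEdef
  have herr' : ‖E‖ ≤ 1 / 2 := herr
  have hDH : (Shat - S).IsHermitian := hShat.sub hS.isHermitian
  have hEH : E.IsHermitian := by
    show Eᴴ = E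
    rw [hEdef, Matrix.conjTranspose_mul, Matrix.conjTranspose_mul, hRiH, hDH.eq, ← mul_assoc]
  -- positivity of 1 + E
  have hposE : (1 + E).PosDef := by
    refine Matrix.PosDef.of_dotProduct_mulVec_pos (Matrix.isHermitian_one.add hEH) fun x hx => ?_
    have h1 : |x ⬝ᵥ (E *ᵥ x)| ≤ ‖E‖ * (x ⬝ᵥ x) := abs_dotProduct_mulVec_le E x
    have h2 : 0 < x ⬝ᵥ x := dotProduct_self_pos hx
    have h3 : ‖E‖ * (x ⬝ᵥ x) ≤ (1 / 2) * (x ⬝ᵥ x) :=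
      mul_le_mul_of_nonneg_right herr' h2.le
    rw [star_trivial, Matrix.add_mulVec, Matrix.one_mulVec, dotProduct_add]
    have := abs_le.mp h1
    linarith [this.1]
  -- key decomposition
  have hmulE : R * E * R = Shat - S := by
    rw [hEdef]
    calc R * (R⁻¹ * (Shat - S) * R⁻¹) * R
        = (R * R⁻¹) * ((Shat - S) * (R⁻¹ * R)) := by simp only [mul_assoc]
      _ = Shat - S := by rw [hR1, hR2, one_mul, mul_one]
  have hkey : B = R * (1 + E) * R := by
    rw [mul_add, add_mul, mul_one, hRR, hmulE, hBdef, hAdef]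
    abel
  have hBpsd : B.PosSemidef := by
    rw [hkey]
    have := hposE.posSemidef.mul_mul_conjTranspose_same R
    rwa [hRH] at this
  set Q := msqrt B with hQdef
  have hQQ : Q * Q = B := (msqrt_spec B hBpsd).1
  have hQH : Qᴴ = Q := (msqrt_spec B hBpsd).2
  have hdetB : B.det ≠ 0 := by
    rw [hkey, Matrix.det_mul, Matrix.det_mul]
    exact mul_ne_zero (mul_ne_zero hdetR hposE.det_pos.ne') hdetR
  have hdetQ : Q.det ≠ 0 := by
    intro h
    rw [← hQQ, Matrix.det_mul, h, mul_zero] at hdetB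
    exact hdetB rfl
  have hQ1 : Q * Q⁻¹ = 1 := Matrix.mul_nonsing_inv Q (isUnit_iff_ne_zero.mpr hdetQ)
  have hQ2 : Q⁻¹ * Q = 1 := Matrix.nonsing_inv_mul Q (isUnit_iff_ne_zero.mpr hdetQ)
  have hQiH : Q⁻¹ᴴ = Q⁻¹ := by rw [Matrix.conjTranspose_nonsing_inv, hQH]
  -- inverse identity
  have hBinv : R * B⁻¹ * R = (1 + E)⁻¹ := by
    rw [hkey, Matrix.mul_inv_rev, Matrix.mul_inv_rev]
    calc R * (R⁻¹ * ((1 + E)⁻¹ * R⁻¹)) * R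
        = (R * R⁻¹) * ((1 + E)⁻¹ * (R⁻¹ * R)) := by simp only [mul_assoc]
      _ = (1 + E)⁻¹ := by rw [hR1, hR2, one_mul, mul_one]
  -- Neumann bound
  have hEnorm : ‖-E‖ < 1 := by rw [norm_neg]; linarith
  have hinv : ‖(1 + E)⁻¹‖ ≤ 2 := by
    have h2 : (1 + E)⁻¹ = Ring.inverse (1 - (-E)) := by
      rw [sub_neg_eq_add]; exact Matrix.nonsing_inv_eq_ringInverse _
    rw [h2, ← geom_series_eq_inverse (-E) hEnorm]
    calc ‖∑' n : ℕ, (-E) ^ n‖ ≤ ‖(1 : Matrix (Fin d) (Fin d) ℝ)‖ - 1 + (1 - ‖-E‖)⁻¹ :=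
          tsum_geometric_le_of_norm_lt_one (-E) hEnorm
      _ ≤ 2 := by
          rw [norm_neg]
          have h1 := matrix_norm_one_le (d := d)
          have h2 : (1 - ‖E‖)⁻¹ ≤ 2 := by
            rw [show (2 : ℝ) = (1/2 : ℝ)⁻¹ by norm_num]
            apply inv_anti₀ <;> linarith
          linarith
  constructor
  · -- first bound
    have hXX : (R * Q⁻¹) * (R * Q⁻¹)ᴴ = (1 + E)⁻¹ := by
      rw [Matrix.conjTranspose_mul, hQiH, hRH, ← hBinv]
      calc R * Q⁻¹ * (Q⁻¹ * R) = R * (Q⁻¹ * Q⁻¹) * R := by simp only [mul_assoc]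
        _ = R * B⁻¹ * R := by rw [← Matrix.mul_inv_rev, hQQ]
    have hnorm1 : ‖(R * Q⁻¹) * (R * Q⁻¹)ᴴ‖ = ‖R * Q⁻¹‖ * ‖R * Q⁻¹‖ := by
      have := Matrix.l2_opNorm_conjTranspose_mul_self ((R * Q⁻¹)ᴴ)
      rwa [Matrix.conjTranspose_conjTranspose, Matrix.l2_opNorm_conjTranspose] at this
    rw [pow_two, ← hnorm1, hXX]
    exact hinv
  · -- second bound
    have hYY : (R⁻¹ * Q) * (R⁻¹ * Q)ᴴ = 1 + E := by
      rw [Matrix.conjTranspose_mul, hQH, hRiH]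
      calc R⁻¹ * Q * (Q * R⁻¹) = R⁻¹ * (Q * Q) * R⁻¹ := by simp only [mul_assoc]
        _ = R⁻¹ * (R * (1 + E) * R) * R⁻¹ := by rw [hQQ, hkey]
        _ = (R⁻¹ * R) * (1 + E) * (R * R⁻¹) := by simp only [mul_assoc]
        _ = 1 + E := by rw [hR1, hR2, one_mul, mul_one]
    have hnorm2 : ‖(R⁻¹ * Q) * (R⁻¹ * Q)ᴴ‖ = ‖R⁻¹ * Q‖ * ‖R⁻¹ * Q‖ := by
      have := Matrix.l2_opNorm_conjTranspose_mul_self ((R⁻¹ * Q)ᴴ)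
      rwa [Matrix.conjTranspose_conjTranspose, Matrix.l2_opNorm_conjTranspose] at this
    rw [pow_two, ← hnorm2, hYY]
    calc ‖1 + E‖ ≤ ‖(1 : Matrix (Fin d) (Fin d) ℝ)‖ + ‖E‖ := norm_add_le _ _
      _ ≤ 3 / 2 := by have := matrix_norm_one_le (d := d); linarith
end
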